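/- Let A ⊆ ℕ₀ be a finite 3-free set, S(A) the Stanley sequence generated by A, and S(A,x) its counting function. Then for every real x ≥ 0, x ≤ S(A,x)(S(A,x) + 1)/2 + max A. -/

import Mathlib

/-- A set of nonnegative integers is 3-free if it contains no three-term
arithmetic progression `a < b < c` with `a + c = 2b`. -/
def ThreeFree (S : Set ℕ) : Prop :=
  ∀ a ∈ S, ∀ b ∈ S, ∀ c ∈ S, a < b → b < c → a + c ≠ 2 * b

/-- `stanleyBelow A n` is the set of elements of the Stanley sequence generated by `A`
that are smaller than `n`: at stage `n` we include `n` itself if `n ∈ A`, or if `n`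
exceeds every element of `A` and adjoining `n` to everything chosen so far stays 3-free
(the greedy rule). -/
def stanleyBelow (A : Finset ℕ) : ℕ → Set ℕ
  | 0 => ∅
  | n + 1 => stanleyBelow A n ∪
      {m | m = n ∧ (n ∈ A ∨ ((∀ a ∈ A, a < n) ∧ ThreeFree (stanleyBelow A n ∪ {n})))}

/-- The Stanley sequence `S(A)` generated by `A`, as a set of nonnegative integers. -/
def stanley (A : Finset ℕ) : Set ℕ := ⋃ n, stanleyBelow A n

/-- The counting function `S(A,x) = #{s ∈ S(A) : s ≤ x}`. -/
noncomputable def stanleyCount (A : Finset ℕ) (x : ℝ) : ℕ :=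
  Nat.card {s : ℕ | s ∈ stanley A ∧ (s : ℝ) ≤ x}

/-- `H S n = #{(s₁,s₂) : s₁,s₂ ∈ S, s₁ < s₂, n = 2s₂ - s₁}`. -/
noncomputable def H (S : Set ℕ) (n : ℕ) : ℕ :=
  Nat.card {p : ℕ × ℕ | p.1 ∈ S ∧ p.2 ∈ S ∧ p.1 < p.2 ∧ n + p.1 = 2 * p.2}

lemma threeFree_mono {S T : Set ℕ} (h : S ⊆ T) (hT : ThreeFree T) : ThreeFree S :=
  fun a ha b hb c hc => hT a (h ha) b (h hb) c (h hc)

lemma below_lt (A : Finset ℕ) : ∀ n, ∀ m ∈ stanleyBelow A n, m < n := by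
  intro n
  induction n with
  | zero => intro m hm; exact absurd hm (Set.notMem_empty m)
  | succ n ih =>
    intro m hm
    rcases hm with h | h
    · exact (ih m h).trans (Nat.lt_succ_self n)
    · rw [h.1]; exact Nat.lt_succ_self n

lemma mem_below_self (A : Finset ℕ) {n m : ℕ} (h : m ∈ stanleyBelow A n) :
    m ∈ stanleyBelow A (m + 1) := by
  induction n with
  | zero => exact absurd h (Set.notMem_empty m)
  | succ n ih =>
    rcases h with h | h
    · exact ih h
    · rw [h.1]; exact Or.inr ⟨rfl, h.2⟩

lemma mem_stanley_iff (A : Finset ℕ) (m : ℕ) :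
    m ∈ stanley A ↔ m ∈ stanleyBelow A (m + 1) := by
  constructor
  · intro h
    obtain ⟨n, hn⟩ := Set.mem_iUnion.mp h
    exact mem_below_self A hn
  · intro h; exact Set.mem_iUnion.mpr ⟨m + 1, h⟩

lemma mem_A_stanley (A : Finset ℕ) {a : ℕ} (ha : a ∈ A) : a ∈ stanley A :=
  (mem_stanley_iff A a).mpr (Or.inr ⟨rfl, Or.inl ha⟩)

lemma below_structure (A : Finset ℕ) (hA3 : ThreeFree ↑A) : ∀ n,
    ThreeFree (stanleyBelow A n) ∧
      ∀ m ∈ stanleyBelow A n, m ∈ A ∨ ∀ a ∈ A, a < m := by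
  intro n
  induction n with
  | zero =>
    constructor
    · intro a ha; exact absurd ha (Set.notMem_empty a)
    · intro m hm; exact absurd hm (Set.notMem_empty m)
  | succ n ih =>
    by_cases hC : n ∈ A ∨ ((∀ a ∈ A, a < n) ∧ ThreeFree (stanleyBelow A n ∪ {n}))
    · have hset : stanleyBelow A (n + 1) = stanleyBelow A n ∪ {n} := by
        show stanleyBelow A n ∪ _ = _
        ext m
        constructor
        · rintro (h | h)
          · exact Or.inl h
          · exact Or.inr h.1
        · rintro (h | h)
          · exact Or.inl h
          · exact Or.inr ⟨h, hC⟩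
      rw [hset]
      constructor
      · rcases hC with hC | hC
        · -- n ∈ A; everything in stanleyBelow A n is in A
          have hsub : stanleyBelow A n ∪ {n} ⊆ ↑A := by
            rintro m (hm | hm)
            · rcases ih.2 m hm with h | h
              · exact h
              · exact absurd (below_lt A n m hm) (not_lt.mpr (h n hC).le)
            · rw [hm]; exact hC
          exact threeFree_mono hsub hA3
        · exact hC.2
      · rintro m (hm | hm)
        · exact ih.2 m hm
        · rw [hm]
          rcases hC with hC | hC
          · exact Or.inl hC
          · exact Or.inr hC.1
    · have hset : stanleyBelow A (n + 1) = stanleyBelow A n := by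
        show stanleyBelow A n ∪ _ = _
        ext m
        constructor
        · rintro (h | h)
          · exact h
          · exact absurd h.2 hC
        · exact fun h => Or.inl h
      rw [hset]; exact ih

lemma blocked (A : Finset ℕ) (hA3 : ThreeFree ↑A) (n : ℕ)
    (hgr : ∀ a ∈ A, a < n) (hn : n ∉ stanley A) :
    ∃ s1 s2 : ℕ, s1 ∈ stanley A ∧ s2 ∈ stanley A ∧ s1 < s2 ∧ s2 < n ∧
      s1 + n = 2 * s2 := by
  have hnb : n ∉ stanleyBelow A (n + 1) := fun h => hn ((mem_stanley_iff A n).mpr h)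
  have hnA : n ∉ A := fun h => lt_irrefl n (hgr n h)
  have hTF : ¬ ThreeFree (stanleyBelow A n ∪ {n}) := by
    intro h
    exact hnb (Or.inr ⟨rfl, Or.inr ⟨hgr, h⟩⟩)
  unfold ThreeFree at hTF
  push_neg at hTF
  obtain ⟨a, ha, b, hb, c, hc, hab, hbc, habc⟩ := hTF
  have hstruct := below_structure A hA3 n
  have hlt := below_lt A n
  -- identify which of a, b, c equals n
  have hc' : c = n := by
    rcases hc with hc | hc
    · -- c ∈ stanleyBelow A n, so a, b too (a < b < c < n)
      exfalso
      have ha' : a ∈ stanleyBelow A n := by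
        rcases ha with h | h
        · exact h
        · exact absurd (h ▸ (hab.trans hbc)) (not_lt.mpr (hlt c hc).le)
      have hb' : b ∈ stanleyBelow A n := by
        rcases hb with h | h
        · exact h
        · exact absurd (h ▸ hbc) (not_lt.mpr (hlt c hc).le)
      exact hstruct.1 a ha' b hb' c hc hab hbc habc
    · exact hc
  have ha' : a ∈ stanleyBelow A n := by
    rcases ha with h | h
    · exact h
    · exact absurd (hc' ▸ (hab.trans hbc)) (by rw [h]; exact lt_irrefl n)
  have hb' : b ∈ stanleyBelow A n := by
    rcases hb with h | h
    · exact h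
    · exact absurd (hc' ▸ hbc) (by rw [h]; exact lt_irrefl n)
  exact ⟨a, b, Set.mem_iUnion.mpr ⟨n, ha'⟩, Set.mem_iUnion.mpr ⟨n, hb'⟩, hab,
    hlt b hb', by omega⟩

/-- `x ≤ S(A,x)(S(A,x) + 1)/2 + max A`. -/
theorem le_count_mul_add (A : Finset ℕ) (hA : A.Nonempty)
    (hA3 : ThreeFree ↑A) (x : ℝ) (hx : 0 ≤ x) :
    x ≤ (stanleyCount A x : ℝ) * ((stanleyCount A x : ℝ) + 1) / 2 + (A.max' hA : ℝ) := by
  classical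
  set M := A.max' hA with hM
  by_cases hMx : (M : ℝ) ≤ x
  swap
  · push_neg at hMx
    have h0 : (0:ℝ) ≤ (stanleyCount A x : ℝ) * ((stanleyCount A x : ℝ) + 1) / 2 := by
      positivity
    linarith
  set N := ⌊x⌋₊ with hN
  set F : Finset ℕ := (Finset.range (N + 1)).filter (· ∈ stanley A) with hF
  have hmemF : ∀ s : ℕ, s ∈ F ↔ s ≤ N ∧ s ∈ stanley A := by
    intro s
    simp [hF, Finset.mem_filter, Finset.mem_range, Nat.lt_succ_iff]
  have hsetF : {s : ℕ | s ∈ stanley A ∧ (s : ℝ) ≤ x} = ↑F := by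
    ext s
    simp only [Set.mem_setOf_eq, Finset.coe_filter, hF, Finset.mem_range, Nat.lt_succ_iff]
    rw [Nat.le_floor_iff hx]
    tauto
  have hk : stanleyCount A x = F.card := by
    unfold stanleyCount
    rw [Nat.card_coe_set_eq, hsetF, Set.ncard_coe_finset]
  set k := F.card with hkk
  have hMN : M ≤ N := Nat.le_floor hMx
  have hMF : M ∈ F := (hmemF M).mpr ⟨hMN, mem_A_stanley A (A.max'_mem hA)⟩
  have hk1 : 1 ≤ k := Finset.card_pos.mpr ⟨M, hMF⟩
  -- part 1 : elements of the Stanley set in (M, N]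
  have h1 : ((Finset.Ioc M N).filter (· ∈ stanley A)).card ≤ k - 1 := by
    have hsub : (Finset.Ioc M N).filter (· ∈ stanley A) ⊆ F.erase M := by
      intro m hm
      rw [Finset.mem_filter, Finset.mem_Ioc] at hm
      exact Finset.mem_erase.mpr ⟨Nat.ne_of_gt hm.1.1, (hmemF m).mpr ⟨hm.1.2, hm.2⟩⟩
    calc ((Finset.Ioc M N).filter (· ∈ stanley A)).card ≤ (F.erase M).card :=
          Finset.card_le_card hsub
      _ = k - 1 := Finset.card_erase_of_mem hMF
  -- part 2 : blocked elements
  have key : ∀ n : ℕ, ∃ p : ℕ × ℕ, M < n → n ∉ stanley A →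
      p.1 ∈ stanley A ∧ p.2 ∈ stanley A ∧ p.1 < p.2 ∧ p.2 < n ∧ p.1 + n = 2 * p.2 := by
    intro n
    by_cases h : M < n ∧ n ∉ stanley A
    · obtain ⟨s1, s2, hs⟩ := blocked A hA3 n
        (fun a ha => lt_of_le_of_lt (A.le_max' a ha) h.1) h.2
      exact ⟨(s1, s2), fun _ _ => hs⟩
    · exact ⟨(0, 0), fun h1 h2 => absurd ⟨h1, h2⟩ h⟩
  choose f hf using key
  have h2 : ((Finset.Ioc M N).filter (· ∉ stanley A)).card ≤ k.choose 2 := by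
    have hcard : (F.powersetCard 2).card = k.choose 2 := Finset.card_powersetCard 2 F
    rw [← hcard]
    apply Finset.card_le_card_of_injOn (fun n => {(f n).1, (f n).2})
    · intro n hn
      simp only [Finset.mem_coe, Finset.mem_filter, Finset.mem_Ioc] at hn
      obtain ⟨hs1, hs2, hlt, hltn, heq⟩ := hf n hn.1.1 hn.2
      rw [Finset.mem_coe, Finset.mem_powersetCard]
      constructor
      · intro s hs
        rcases Finset.mem_insert.mp hs with h | h
        · rw [h]; exact (hmemF _).mpr ⟨by omega, hs1⟩
        · rw [Finset.mem_singleton.mp h]; exact (hmemF _).mpr ⟨by omega, hs2⟩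
      · rw [Finset.card_insert_of_notMem (by simp [Nat.ne_of_lt hlt]),
          Finset.card_singleton]
    · intro m hm n hn heq
      replace heq : ({(f m).1, (f m).2} : Finset ℕ) = {(f n).1, (f n).2} := heq
      simp only [Finset.mem_coe, Finset.mem_filter, Finset.mem_Ioc] at hm hn
      obtain ⟨_, _, hltm, _, heqm⟩ := hf m hm.1.1 hm.2
      obtain ⟨_, _, hltn, _, heqn⟩ := hf n hn.1.1 hn.2
      have e1 : (f m).1 ∈ ({(f n).1, (f n).2} : Finset ℕ) := by
        rw [← heq]; exact Finset.mem_insert_self _ _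
      have e2 : (f m).2 ∈ ({(f n).1, (f n).2} : Finset ℕ) := by
        rw [← heq]; exact Finset.mem_insert_of_mem (Finset.mem_singleton_self _)
      have e3 : (f n).1 ∈ ({(f m).1, (f m).2} : Finset ℕ) := by
        rw [heq]; exact Finset.mem_insert_self _ _
      simp only [Finset.mem_insert, Finset.mem_singleton] at e1 e2 e3
      omega
  have hsplit : ((Finset.Ioc M N).filter (· ∈ stanley A)).card +
      ((Finset.Ioc M N).filter (· ∉ stanley A)).card = (Finset.Ioc M N).card :=
    Finset.card_filter_add_card_filter_not (fun x => x ∈ stanley A)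
  have hIoc : (Finset.Ioc M N).card = N - M := Nat.card_Ioc M N
  have hnat : N + 1 ≤ M + k + k.choose 2 := by omega
  have hxN : x < (N : ℝ) + 1 := Nat.lt_floor_add_one x
  have hcast : ((N : ℝ) + 1) ≤ (M : ℝ) + k + k.choose 2 := by exact_mod_cast hnat
  have hc2 : (k.choose 2 : ℝ) = (k : ℝ) * ((k : ℝ) - 1) / 2 := Nat.cast_choose_two (K := ℝ) k
  rw [hk]
  have hring : (k : ℝ) * ((k : ℝ) + 1) / 2 = (k : ℝ) + (k : ℝ) * ((k : ℝ) - 1) / 2 := by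
    ring
  linarith
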